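/- Let N, M, a, b be positive integers and let 𝓗 be a finite family of functions from {1, …, N} to {1, …, M} such that for every subset S ⊆ {1, …, N} with |S| ≤ a + b there exists h ∈ 𝓗 injective on S. Define the family 𝒮 = { h⁻¹({1,…,M} ∖ I) : h ∈ 𝓗, I ⊆ {1,…,M}, |I| ≤ b } of subsets of {1, …, N}. Then |𝒮| ≤ |𝓗|·(M+1)^b, and for every pair of disjoint subsets A, B ⊆ {1, …, N} with |A| ≤ a and |B| ≤ b, there exists a set S ∈ 𝒮 satisfying A ⊆ S and B ∩ S = ∅. -/
import Mathlib


/-- Let `𝓗` be a family of functions from `{1, …, N}` to `{1, …, M}` such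
that every set of at most `a + b` elements is shattered injectively by some `h ∈ 𝓗`.
The family `𝒮 = { h⁻¹([M] ∖ I) : h ∈ 𝓗, |I| ≤ b }` has size at most `|𝓗|·(M+1)^b` and is
`(N, a, b)`-universal: for all disjoint `A, B` with `|A| ≤ a`, `|B| ≤ b` there is `S ∈ 𝒮`
with `A ⊆ S` and `B ∩ S = ∅`. -/
theorem stmt_9 (N M a b : ℕ) (hN : 0 < N) (hM : 0 < M) (ha : 0 < a) (hb : 0 < b)
    (𝓗 : Finset (Fin N → Fin M))
    (hperf : ∀ S : Finset (Fin N), S.card ≤ a + b → ∃ h ∈ 𝓗, Set.InjOn h ↑S)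
    (𝒮 : Finset (Finset (Fin N)))
    (h𝒮 : 𝒮 = Finset.image
        (fun p : (Fin N → Fin M) × Finset (Fin M) =>
          Finset.univ.filter fun x => p.1 x ∉ p.2)
        (𝓗 ×ˢ (Finset.univ : Finset (Fin M)).powerset.filter fun I => I.card ≤ b)) :
    𝒮.card ≤ 𝓗.card * (M + 1) ^ b ∧
      ∀ A B : Finset (Fin N), Disjoint A B → A.card ≤ a → B.card ≤ b →
        ∃ S ∈ 𝒮, A ⊆ S ∧ Disjoint B S := by
  constructor
  · -- counting part
    have hF : ((Finset.univ : Finset (Fin M)).powerset.filter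
        fun I => I.card ≤ b).card ≤ (M + 1) ^ b := by
      have hsub : ((Finset.univ : Finset (Fin M)).powerset.filter fun I => I.card ≤ b)
          ⊆ (Finset.range (b + 1)).biUnion
            (fun i => Finset.powersetCard i (Finset.univ : Finset (Fin M))) := by
        intro I hI
        simp only [Finset.mem_filter, Finset.mem_powerset] at hI
        simp only [Finset.mem_biUnion, Finset.mem_range, Finset.mem_powersetCard]
        exact ⟨I.card, Nat.lt_succ_of_le hI.2, hI.1, rfl⟩
      calc ((Finset.univ : Finset (Fin M)).powerset.filter fun I => I.card ≤ b).card
          ≤ ((Finset.range (b + 1)).biUnion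
            (fun i => Finset.powersetCard i (Finset.univ : Finset (Fin M)))).card :=
            Finset.card_le_card hsub
        _ ≤ ∑ i ∈ Finset.range (b + 1),
            (Finset.powersetCard i (Finset.univ : Finset (Fin M))).card :=
            Finset.card_biUnion_le
        _ ≤ ∑ i ∈ Finset.range (b + 1), M ^ i * b.choose i := by
            apply Finset.sum_le_sum
            intro i hi
            rw [Finset.card_powersetCard, Finset.card_univ, Fintype.card_fin]
            have h1 : M.choose i ≤ M ^ i := Nat.choose_le_pow M i
            have h2 : 1 ≤ b.choose i :=
              Nat.choose_pos (Nat.lt_succ_iff.mp (Finset.mem_range.mp hi))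
            calc M.choose i ≤ M ^ i := h1
              _ = M ^ i * 1 := (mul_one _).symm
              _ ≤ M ^ i * b.choose i := Nat.mul_le_mul_left _ h2
        _ = (M + 1) ^ b := by
            have := add_pow M 1 b
            simp only [one_pow, mul_one] at this
            rw [this]; simp [Nat.cast_id]
    rw [h𝒮]
    calc (Finset.image _ _).card
        ≤ (𝓗 ×ˢ (Finset.univ : Finset (Fin M)).powerset.filter fun I => I.card ≤ b).card :=
          Finset.card_image_le
      _ = 𝓗.card * ((Finset.univ : Finset (Fin M)).powerset.filter
            fun I => I.card ≤ b).card := Finset.card_product _ _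
      _ ≤ 𝓗.card * (M + 1) ^ b := Nat.mul_le_mul_left _ hF
  · intro A B hAB hA hB
    obtain ⟨h, hh𝓗, hinj⟩ := hperf (A ∪ B)
      (le_trans (Finset.card_union_le _ _) (Nat.add_le_add hA hB))
    set I := B.image h with hI
    refine ⟨Finset.univ.filter fun x => h x ∉ I, ?_, ?_, ?_⟩
    · rw [h𝒮]
      apply Finset.mem_image.mpr
      refine ⟨(h, I), ?_, rfl⟩
      simp only [Finset.mem_product, Finset.mem_filter, Finset.mem_powerset]
      exact ⟨hh𝓗, Finset.subset_univ _, le_trans (Finset.card_image_le) hB⟩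
    · intro x hx
      simp only [Finset.mem_filter, Finset.mem_univ, true_and, hI, Finset.mem_image]
      rintro ⟨y, hyB, hxy⟩
      have hx' : x ∈ (↑(A ∪ B) : Set (Fin N)) := by simp [hx]
      have hy' : y ∈ (↑(A ∪ B) : Set (Fin N)) := by simp [hyB]
      have : y = x := hinj hy' hx' hxy
      exact (Finset.disjoint_left.mp hAB hx) (this ▸ hyB)
    · rw [Finset.disjoint_left]
      intro y hyB hyS
      simp only [Finset.mem_filter, Finset.mem_univ, true_and] at hyS
      exact hyS (Finset.mem_image_of_mem h hyB)
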